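/- Let ρ be a polymatroid on E, let A ⊆ E, and define R_ρ(A) as the set of cyclic flats B of ρ with ρ(A) = ρ(B) + Σ_{i ∈ A \ B} ρ({i}). Then every B ∈ R_ρ(A) satisfies cl_ρ(cy_ρ(A)) ⊆ B ⊆ cy_ρ(cl_ρ(A)). -/

import Mathlib

open Finset
open scoped Classical

variable {α : Type*}

def IsPolymatroid [DecidableEq α] (ρ : Finset α → ℝ) : Prop :=
  ρ ∅ = 0 ∧ (∀ A B : Finset α, A ⊆ B → ρ A ≤ ρ B) ∧
    (∀ A B : Finset α, ρ (A ∪ B) + ρ (A ∩ B) ≤ ρ A + ρ B)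

/-- `A` is a flat of the polymatroid `ρ` (ground set = all of `α`). -/
def PmFlat [DecidableEq α] (ρ : Finset α → ℝ) (A : Finset α) : Prop :=
  ∀ i : α, i ∉ A → ρ A < ρ (insert i A)

/-- `A` is a cyclic set of the polymatroid `ρ`. -/
def PmCyclic [DecidableEq α] (ρ : Finset α → ℝ) (A : Finset α) : Prop :=
  ∀ i ∈ A, 0 < ρ {i} → ρ A < ρ (A.erase i) + ρ {i}

/-- The closure of `A`: the set `{i : ρ(A ∪ {i}) = ρ(A)}`. -/
noncomputable def pmCl [DecidableEq α] [Fintype α] (ρ : Finset α → ℝ) (A : Finset α) :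
    Finset α :=
  Finset.univ.filter (fun i => ρ (insert i A) = ρ A)

/-- The maximum cyclic subset of `A`: the union of all cyclic subsets of `A`. -/
noncomputable def pmCy [DecidableEq α] (ρ : Finset α → ℝ) (A : Finset α) : Finset α :=
  (A.powerset.filter (fun D => PmCyclic ρ D)).sup id

section Aux
variable [DecidableEq α] {ρ : Finset α → ℝ}

lemma pm_nonneg (hρ : IsPolymatroid ρ) (X : Finset α) : 0 ≤ ρ X := by
  have := hρ.2.1 ∅ X (empty_subset X)
  rw [hρ.1] at this; exact this

lemma pm_insert_le (hρ : IsPolymatroid ρ) (i : α) (X : Finset α) :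
    ρ (insert i X) ≤ ρ X + ρ {i} := by
  have h := hρ.2.2 X {i}
  have h0 := pm_nonneg hρ (X ∩ {i})
  have hu : X ∪ {i} = insert i X := by
    rw [union_comm, ← insert_eq]
  rw [hu] at h
  linarith

lemma pm_union_sum_le (hρ : IsPolymatroid ρ) (X S : Finset α) :
    ρ (X ∪ S) ≤ ρ X + ∑ i ∈ S, ρ {i} := by
  induction S using Finset.induction_on with
  | empty => simp
  | insert _ _ hi ih =>
    rename_i i S
    rw [Finset.union_insert, Finset.sum_insert hi]
    have := pm_insert_le hρ i (X ∪ S)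
    linarith

lemma pm_union_sdiff_le (hρ : IsPolymatroid ρ) (X Y : Finset α) :
    ρ (X ∪ Y) ≤ ρ X + ∑ i ∈ Y \ X, ρ {i} := by
  have := pm_union_sum_le hρ X (Y \ X)
  rwa [Finset.union_sdiff_self_eq_union] at this

end Aux

theorem mem_R_between [DecidableEq α] [Fintype α]
    (ρ : Finset α → ℝ) (hρ : IsPolymatroid ρ) (A : Finset α) {B : Finset α}
    (hBflat : PmFlat ρ B) (hBcyc : PmCyclic ρ B)
    (hBeq : ρ A = ρ B + ∑ i ∈ A \ B, ρ {i}) :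
    pmCl ρ (pmCy ρ A) ⊆ B ∧ B ⊆ pmCy ρ (pmCl ρ A) := by
  obtain ⟨h0, hmono, hsub⟩ := hρ
  have hρ' : IsPolymatroid ρ := ⟨h0, hmono, hsub⟩
  -- ρ (A ∪ B) = ρ A
  have hAB : ρ (A ∪ B) = ρ A := by
    have h1 : ρ (B ∪ A) ≤ ρ B + ∑ i ∈ A \ B, ρ {i} := pm_union_sdiff_le hρ' B A
    have h2 : ρ A ≤ ρ (A ∪ B) := hmono A (A ∪ B) Finset.subset_union_left
    rw [Finset.union_comm] at h1
    linarith
  -- membership in closure of subset of B implies membership in B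
  have hclB : ∀ (X : Finset α) (i : α), X ⊆ B → ρ (insert i X) = ρ X → i ∈ B := by
    intro X i hXB hcl
    by_contra hiB
    have hflat := hBflat i hiB
    have h := hsub B (insert i X)
    have h1 : B ∪ insert i X = insert i B := by
      ext x
      simp only [Finset.mem_union, Finset.mem_insert]
      constructor
      · rintro (hx | hx | hx)
        · exact Or.inr hx
        · exact Or.inl hx
        · exact Or.inr (hXB hx)
      · rintro (hx | hx)
        · exact Or.inr (Or.inl hx)
        · exact Or.inl hx
    have h2 : ρ X ≤ ρ (B ∩ insert i X) :=
      hmono X _ (Finset.subset_inter hXB (Finset.subset_insert i X))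
    rw [h1] at h
    linarith
  -- key: for D ⊆ A, ρ(B ∪ D) = ρ B + ∑_{D \ B} ρ{i}
  have key : ∀ D : Finset α, D ⊆ A → ρ (B ∪ D) = ρ B + ∑ i ∈ D \ B, ρ {i} := by
    intro D hDA
    have hle : ρ (B ∪ D) ≤ ρ B + ∑ i ∈ D \ B, ρ {i} := pm_union_sdiff_le hρ' B D
    have hset1 : (B ∪ D) ∪ (A ∪ B) = A ∪ B := by
      ext x; simp only [Finset.mem_union]
      constructor
      · rintro ((hx | hx) | hx)
        · exact Or.inr hx
        · exact Or.inl (hDA hx)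
        · exact hx
      · exact fun hx => Or.inr hx
    have hge := pm_union_sdiff_le hρ' (B ∪ D) (A ∪ B)
    rw [hset1] at hge
    have hset2 : (A ∪ B) \ (B ∪ D) = (A \ B) \ (D \ B) := by
      ext x
      simp only [Finset.mem_sdiff, Finset.mem_union]
      tauto
    rw [hset2] at hge
    have hss : D \ B ⊆ A \ B := by
      intro x hx
      simp only [Finset.mem_sdiff] at hx ⊢
      exact ⟨hDA hx.1, hx.2⟩
    have hsum := Finset.sum_sdiff (f := fun i => ρ {i}) hss
    rw [hAB] at hge
    linarith
  -- every cyclic subset of A is contained in B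
  have hDsub : ∀ D : Finset α, D ⊆ A → PmCyclic ρ D → D ⊆ B := by
    intro D hDA hDcyc
    intro i hiD
    by_contra hiB
    have hipos : 0 < ρ {i} := by
      rcases lt_or_eq_of_le (pm_nonneg hρ' {i}) with h | h
      · exact h
      · exfalso
        have := pm_insert_le hρ' i B
        have hflat := hBflat i hiB
        rw [← h] at this
        linarith
    have hcy := hDcyc i hiD hipos
    -- submodularity on Y = B ∪ D.erase i and D
    have hsubm := hsub (B ∪ D.erase i) D
    have hset1 : (B ∪ D.erase i) ∪ D = B ∪ D := by
      ext x
      simp only [Finset.mem_union, Finset.mem_erase]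
      constructor
      · rintro ((hx | hx) | hx)
        · exact Or.inl hx
        · exact Or.inr hx.2
        · exact Or.inr hx
      · rintro (hx | hx)
        · exact Or.inl (Or.inl hx)
        · exact Or.inr hx
    have hss : D.erase i ⊆ (B ∪ D.erase i) ∩ D := by
      intro x hx
      simp only [Finset.mem_inter, Finset.mem_union]
      exact ⟨Or.inr hx, Finset.erase_subset _ _ hx⟩
    have h2 : ρ (D.erase i) ≤ ρ ((B ∪ D.erase i) ∩ D) := hmono _ _ hss
    rw [hset1] at hsubm
    have hBD := key D hDA
    have hBD' := key (D.erase i) (fun x hx => hDA (Finset.erase_subset _ _ hx))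
    have herase : (D.erase i) \ B = (D \ B).erase i := by
      ext x
      simp only [Finset.mem_sdiff, Finset.mem_erase]
      tauto
    rw [herase] at hBD'
    have hmem : i ∈ D \ B := Finset.mem_sdiff.mpr ⟨hiD, hiB⟩
    have hsum : ∑ j ∈ (D \ B).erase i, ρ {j} + ρ {i} = ∑ j ∈ D \ B, ρ {j} :=
      Finset.sum_erase_add _ _ hmem
    linarith
  have hcyB : pmCy ρ A ⊆ B := by
    rw [← Finset.le_iff_subset]
    apply Finset.sup_le
    intro D hD
    rw [Finset.mem_filter, Finset.mem_powerset] at hD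
    exact Finset.le_iff_subset.mpr (hDsub D hD.1 hD.2)
  constructor
  · intro i hi
    rw [pmCl, Finset.mem_filter] at hi
    exact hclB (pmCy ρ A) i hcyB hi.2
  · have hBcl : B ⊆ pmCl ρ A := by
      intro i hiB
      rw [pmCl, Finset.mem_filter]
      refine ⟨Finset.mem_univ i, le_antisymm ?_ (hmono A _ (Finset.subset_insert i A))⟩
      have : insert i A ⊆ A ∪ B := by
        intro x hx
        rcases Finset.mem_insert.mp hx with h | h
        · exact Finset.mem_union_right _ (h ▸ hiB)
        · exact Finset.mem_union_left _ h
      calc ρ (insert i A) ≤ ρ (A ∪ B) := hmono _ _ this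
        _ = ρ A := hAB
    have hmem : B ∈ (pmCl ρ A).powerset.filter (fun D => PmCyclic ρ D) :=
      Finset.mem_filter.mpr ⟨Finset.mem_powerset.mpr hBcl, hBcyc⟩
    exact Finset.le_iff_subset.mp (Finset.le_sup (f := id) hmem)
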